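/- arXiv:1806.07020 — 7 statements merged into one kernel-verified Lean document; each statement's English description precedes it below -/
import Mathlib

section
/- Let X be a metric space, let g and h be bijective self-isometries of X, and let x, y ∈ X. For p, q ∈ X write H(p,q) = {z ∈ X : dist(z,p) ≤ dist(z,q)}. If the four sets H(g x, x), H(g⁻¹ x, x), H(h y, y), H(h⁻¹ y, y) are pairwise disjoint, then g and h generate a free group of rank two: the group homomorphism from the free group on two generators to the group of bijective self-isometries of X sending the two generators to g and h is injective. -/
open Pointwise

/-- The tautological action of the isometry group on the space. -/
instance isometryEquivMulAction {X : Type*} [MetricSpace X] : MulAction (X ≃ᵢ X) X where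
  smul e z := e z
  one_smul _ := rfl
  mul_smul _ _ _ := rfl

lemma isometryEquiv_smul_def {X : Type*} [MetricSpace X] (e : X ≃ᵢ X) (z : X) :
    e • z = e z := rfl

lemma pingpong_key {X : Type*} [MetricSpace X] (e : X ≃ᵢ X) (x : X) :
    e • {z : X | dist z (e⁻¹ x) ≤ dist z x}ᶜ ⊆ {z : X | dist z (e x) ≤ dist z x} := by
  rintro _ ⟨w, hw, rfl⟩
  simp only [Set.mem_compl_iff, Set.mem_setOf_eq, not_le] at hw
  have h1 : dist (e w) (e x) = dist w x := e.isometry.dist_eq w x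
  have h2 : dist (e w) x = dist w (e⁻¹ x) := by
    conv_lhs => rw [show x = e (e⁻¹ x) from (e.apply_symm_apply x).symm]
    exact e.isometry.dist_eq w (e⁻¹ x)
  show dist (e w) (e x) ≤ dist (e w) x
  rw [h1, h2]
  exact hw.le

/-- Ping-pong for bisector half-spaces: if the four half-spaces
`H(g x, x)`, `H(g⁻¹ x, x)`, `H(h y, y)`, `H(h⁻¹ y, y)` are pairwise disjoint,
then `g, h` generate a free group of rank two. -/
theorem pingpong_halfspaces_free {X : Type*} [MetricSpace X]
    (g h : X ≃ᵢ X) (x y : X)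
    (hdisj : ([{z : X | dist z (g x) ≤ dist z x},
               {z : X | dist z (g⁻¹ x) ≤ dist z x},
               {z : X | dist z (h y) ≤ dist z y},
               {z : X | dist z (h⁻¹ y) ≤ dist z y}] : List (Set X)).Pairwise Disjoint) :
    Function.Injective ⇑(FreeGroup.lift ![g, h] : FreeGroup (Fin 2) →* (X ≃ᵢ X)) := by
  simp only [List.pairwise_cons, List.mem_cons, List.mem_singleton, List.not_mem_nil,
    List.Pairwise.nil, and_true, forall_eq_or_imp, forall_eq] at hdisj
  obtain ⟨⟨d12, d13, d14, -⟩, ⟨d23, d24, -⟩, ⟨d34, -⟩, -⟩ := hdisj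
  have key : Function.Injective
      ⇑(FreeGroup.lift ((![g, h] : Fin 2 → X ≃ᵢ X) ∘ ULift.down) :
        FreeGroup (ULift (Fin 2)) →* (X ≃ᵢ X)) := by
    apply FreeGroup.injective_lift_of_ping_pong ((![g, h] : Fin 2 → X ≃ᵢ X) ∘ ULift.down)
      (X := (![{z : X | dist z (g x) ≤ dist z x}, {z : X | dist z (h y) ≤ dist z y}]
        : Fin 2 → Set X) ∘ ULift.down)
      (Y := (![{z : X | dist z (g⁻¹ x) ≤ dist z x}, {z : X | dist z (h⁻¹ y) ≤ dist z y}]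
        : Fin 2 → Set X) ∘ ULift.down)
    · rintro ⟨i⟩
      fin_cases i
      · exact ⟨g x, by simpa using dist_nonneg⟩
      · exact ⟨h y, by simpa using dist_nonneg⟩
    · rintro ⟨i⟩ ⟨j⟩ hij
      have hij' : i ≠ j := fun e => hij (congrArg ULift.up e)
      fin_cases i <;> fin_cases j <;>
        first
          | exact absurd rfl hij'
          | (simp only [Function.comp_apply, Matrix.cons_val_zero, Matrix.cons_val_one,
              Matrix.head_cons]
             first | exact d13 | exact d13.symm)
    · rintro ⟨i⟩ ⟨j⟩ hij
      have hij' : i ≠ j := fun e => hij (congrArg ULift.up e)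
      fin_cases i <;> fin_cases j <;>
        first
          | exact absurd rfl hij'
          | (simp only [Function.comp_apply, Matrix.cons_val_zero, Matrix.cons_val_one,
              Matrix.head_cons]
             first | exact d24 | exact d24.symm)
    · rintro ⟨i⟩ ⟨j⟩
      fin_cases i <;> fin_cases j <;>
        simp only [Function.comp_apply, Matrix.cons_val_zero, Matrix.cons_val_one,
          Matrix.head_cons]
      · exact d12
      · exact d14
      · exact d23.symm
      · exact d34
    · rintro ⟨i⟩
      fin_cases i
      · simpa using pingpong_key g x
      · simpa using pingpong_key h y
    · rintro ⟨i⟩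
      fin_cases i
      · have := pingpong_key g⁻¹ x
        simpa using this
      · have := pingpong_key h⁻¹ y
        simpa using this
  have comp_eq : (FreeGroup.lift ![g, h] : FreeGroup (Fin 2) →* (X ≃ᵢ X)) =
      (FreeGroup.lift ((![g, h] : Fin 2 → X ≃ᵢ X) ∘ ULift.down)).comp
        (FreeGroup.freeGroupCongr Equiv.ulift.symm).toMonoidHom := by
    ext i
    simp
  rw [comp_eq, MonoidHom.coe_comp]
  exact key.comp (FreeGroup.freeGroupCongr Equiv.ulift.symm).injective
end

section
/- Let Y be a metric space and δ ≥ 0. Say that a point w lies between points p and q if dist(p,w) + dist(w,q) = dist(p,q). Assume Y has δ-thin triangles in the following sense: for all a, z₁, z₂ ∈ Y and every point w between z₁ and z₂, there exists v ∈ Y with dist(w,v) ≤ δ such that v lies between a and z₁ or v lies between a and z₂. Let A ⊆ Y and a ∈ A be such that A is starlike with respect to a, i.e. for every z ∈ A every point between a and z belongs to A. Then A is δ-quasiconvex: for all z₁, z₂ ∈ A, every point w between z₁ and z₂ satisfies infDist(w, A) ≤ δ. -/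
/-- Starlike subsets of a space with `δ`-thin triangles are `δ`-quasiconvex
(Lemma 3.3 of the paper). Here `w` lies between `p` and `q` iff
`dist p w + dist w q = dist p q`. -/
theorem starlike_quasiconvex {Y : Type*} [MetricSpace Y] (δ : ℝ) (hδ : 0 ≤ δ)
    (hthin : ∀ a z₁ z₂ w : Y, dist z₁ w + dist w z₂ = dist z₁ z₂ →
      ∃ v : Y, dist w v ≤ δ ∧
        (dist a v + dist v z₁ = dist a z₁ ∨ dist a v + dist v z₂ = dist a z₂))
    (A : Set Y) (a : Y) (ha : a ∈ A)
    (hstar : ∀ z ∈ A, ∀ w : Y, dist a w + dist w z = dist a z → w ∈ A) :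
    ∀ z₁ ∈ A, ∀ z₂ ∈ A, ∀ w : Y,
      dist z₁ w + dist w z₂ = dist z₁ z₂ → Metric.infDist w A ≤ δ := by
  intro z₁ hz₁ z₂ hz₂ w hw
  obtain ⟨v, hv, hcase⟩ := hthin a z₁ z₂ w hw
  have hvA : v ∈ A := by
    rcases hcase with h | h
    · exact hstar z₁ hz₁ v h
    · exact hstar z₂ hz₂ v h
  calc Metric.infDist w A ≤ dist w v := Metric.infDist_le_dist_of_mem hvA
    _ ≤ δ := hv
end

section
/- For all real numbers a, b, c ≥ 0, if cosh(a) ≥ cosh(b) · cosh(c), then a ≥ b + c − 2·arccosh(√2), where arccosh(√2) = log(1+√2). -/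
/-- Comparison form of Lemma 3.1: if `cosh a ≥ cosh b * cosh c` then
`a ≥ b + c - 2 * arccosh √2`, where `arccosh √2 = log (1 + √2)`. -/
theorem cosh_ineq_length_lower_bound (a b c : ℝ)
    (ha : 0 ≤ a) (hb : 0 ≤ b) (hc : 0 ≤ c)
    (h : Real.cosh a ≥ Real.cosh b * Real.cosh c) :
    a ≥ b + c - 2 * Real.log (1 + Real.sqrt 2) := by
  have hexp : Real.exp a ≥ Real.exp (b + c) / 4 := by
    have h1 : Real.cosh a ≤ Real.exp a := by
      rw [Real.cosh_eq]
      have : Real.exp (-a) ≤ Real.exp a := Real.exp_le_exp.mpr (by linarith)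
      linarith
    have h2 : Real.exp b / 2 ≤ Real.cosh b := by
      rw [Real.cosh_eq]
      have := (Real.exp (-b)).exp_pos  -- dummy
      have : 0 < Real.exp (-b) := Real.exp_pos _
      linarith
    have h3 : Real.exp c / 2 ≤ Real.cosh c := by
      rw [Real.cosh_eq]
      have : 0 < Real.exp (-c) := Real.exp_pos _
      linarith
    have h4 : Real.exp b / 2 * (Real.exp c / 2) ≤ Real.cosh b * Real.cosh c := by
      apply mul_le_mul h2 h3 (by positivity)
      positivity
    rw [Real.exp_add]
    nlinarith
  have key : a ≥ b + c - Real.log 4 := by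
    have : Real.exp (b + c - Real.log 4) ≤ Real.exp a := by
      rw [Real.exp_sub, Real.exp_log (by norm_num)]
      exact hexp
    exact Real.exp_le_exp.mp this
  have hlog : Real.log 4 ≤ 2 * Real.log (1 + Real.sqrt 2) := by
    have hs : Real.sqrt 2 ^ 2 = 2 := Real.sq_sqrt (by norm_num)
    have hs1 : 1 ≤ Real.sqrt 2 := by nlinarith [Real.sqrt_nonneg 2]
    have h4 : (4 : ℝ) ≤ (1 + Real.sqrt 2) ^ 2 := by nlinarith
    calc Real.log 4 ≤ Real.log ((1 + Real.sqrt 2) ^ 2) :=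
          Real.log_le_log (by norm_num) h4
      _ = 2 * Real.log (1 + Real.sqrt 2) := by
          rw [Real.log_pow]; push_cast; ring
  linarith
end

section
/- Let ℍ be the hyperbolic plane (the upper half-plane with its hyperbolic metric). Let x, x₊, x̂₊, x₊' ∈ ℍ with x₊ ≠ x̂₊ lie on a common geodesic in this order, i.e. dist(x,x₊) + dist(x₊,x̂₊) + dist(x̂₊,x₊') = dist(x,x₊'). If dist(x̂₊, x₊') ≥ dist(x, x₊) + 2·arccosh(√2), then H(x₊, x̂₊) ⊆ H(x, x₊'): every z ∈ ℍ with dist(z,x₊) ≤ dist(z,x̂₊) satisfies dist(z,x) ≤ dist(z,x₊'). -/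
open UpperHalfPlane

section BisectorAux

open Real

/-- The point `i * exp t` on the imaginary axis. -/
noncomputable def HPt (t : ℝ) : UpperHalfPlane := mk ⟨0, Real.exp t⟩ (Real.exp_pos t)

lemma HPt_coe (t : ℝ) : (HPt t : ℂ) = ⟨0, Real.exp t⟩ := rfl

lemma HPt_im (t : ℝ) : (HPt t).im = Real.exp t := rfl

lemma HPt_dist (s t : ℝ) : dist (HPt s) (HPt t) = |s - t| := by
  have := (isometry_vertical_line 0).dist_eq s t
  simpa [HPt, Real.dist_eq] using this

lemma cosh_dist_HPt (z : UpperHalfPlane) (t : ℝ) :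
    Real.cosh (dist z (HPt t)) =
      (1 / (2 * z.im)) * Real.exp t + (Complex.normSq (z : ℂ) / (2 * z.im)) * Real.exp (-t) := by
  rw [UpperHalfPlane.cosh_dist]
  have h1 : dist (z : ℂ) (HPt t : ℂ) ^ 2 = Complex.normSq ((z : ℂ) - (HPt t : ℂ)) := by
    rw [Complex.dist_eq, Complex.sq_norm]
  rw [h1]
  have h2 : Complex.normSq ((z : ℂ) - (HPt t : ℂ)) =
      z.re ^ 2 + (z.im - Real.exp t) ^ 2 := by
    rw [Complex.normSq_apply]
    simp [HPt_coe, Complex.sub_re, Complex.sub_im, coe_re, coe_im]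
    ring
  rw [h2, HPt_im, Real.exp_neg, Complex.normSq_apply, coe_re, coe_im]
  have hv : z.im ≠ 0 := z.im_ne_zero
  have hE : Real.exp t ≠ 0 := (Real.exp_pos t).ne'
  field_simp
  ring

/-- Metric betweenness of two points of the imaginary axis forces the middle point to
lie on the imaginary axis in between. -/
lemma axis_between {p q : ℝ} (hpq : p < q) (b : UpperHalfPlane)
    (h : dist (HPt p) b + dist b (HPt q) = q - p) :
    ∃ r, p ≤ r ∧ r ≤ q ∧ b = HPt r := by
  have hre : b.re = 0 := by
    have hv : b.im ≠ 0 := b.im_ne_zero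
    have hvpos : 0 < b.im := b.im_pos
    have hP : (0:ℝ) < Real.exp p := Real.exp_pos p
    have hQ : (0:ℝ) < Real.exp q := Real.exp_pos q
    have hn : Complex.normSq (b : ℂ) = b.re ^ 2 + b.im ^ 2 := by
      rw [Complex.normSq_apply, coe_re, coe_im]; ring
    have hA : Real.cosh (dist (HPt p) b) =
        (1 / (2 * b.im)) * Real.exp p + ((b.re ^ 2 + b.im ^ 2) / (2 * b.im)) * Real.exp (-p) := by
      rw [dist_comm, cosh_dist_HPt, hn]
    have hB : Real.cosh (dist b (HPt q)) =
        (1 / (2 * b.im)) * Real.exp q + ((b.re ^ 2 + b.im ^ 2) / (2 * b.im)) * Real.exp (-q) := by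
      rw [cosh_dist_HPt, hn]
    have hC : Real.cosh (q - p) = (Real.exp q * Real.exp (-p) + Real.exp p * Real.exp (-q)) / 2 := by
      rw [Real.cosh_eq, neg_sub, Real.exp_sub, Real.exp_sub, Real.exp_neg p, Real.exp_neg q]
      field_simp
    have hco : Real.cosh (q - p) =
        Real.cosh (dist (HPt p) b) * Real.cosh (dist b (HPt q)) +
          Real.sinh (dist (HPt p) b) * Real.sinh (dist b (HPt q)) := by
      rw [← h, Real.cosh_add]
    have hs : Real.sinh (dist (HPt p) b) * Real.sinh (dist b (HPt q)) =
        Real.cosh (q - p) - Real.cosh (dist (HPt p) b) * Real.cosh (dist b (HPt q)) := by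
      linarith
    have hsq : (Real.cosh (dist (HPt p) b) ^ 2 - 1) * (Real.cosh (dist b (HPt q)) ^ 2 - 1) =
        (Real.cosh (q - p) - Real.cosh (dist (HPt p) b) * Real.cosh (dist b (HPt q))) ^ 2 := by
      rw [← Real.sinh_sq, ← Real.sinh_sq, ← hs]
      ring
    rw [hA, hB, hC] at hsq
    have key : b.re ^ 2 * ((Real.exp q) ^ 2 - (Real.exp p) ^ 2) ^ 2 =
        (4 * (Real.exp p) ^ 2 * (Real.exp q) ^ 2 * b.im ^ 2) *
        ((((1 / (2 * b.im)) * Real.exp p + ((b.re ^ 2 + b.im ^ 2) / (2 * b.im)) * Real.exp (-p)) ^ 2 - 1) *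
          (((1 / (2 * b.im)) * Real.exp q + ((b.re ^ 2 + b.im ^ 2) / (2 * b.im)) * Real.exp (-q)) ^ 2 - 1) -
        ((Real.exp q * Real.exp (-p) + Real.exp p * Real.exp (-q)) / 2 -
          ((1 / (2 * b.im)) * Real.exp p + ((b.re ^ 2 + b.im ^ 2) / (2 * b.im)) * Real.exp (-p)) *
          ((1 / (2 * b.im)) * Real.exp q + ((b.re ^ 2 + b.im ^ 2) / (2 * b.im)) * Real.exp (-q))) ^ 2) := by
      rw [Real.exp_neg p, Real.exp_neg q]
      field_simp
      ring
    rw [sub_eq_zero_of_eq hsq, mul_zero] at key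
    have hne2 : ((Real.exp q) ^ 2 - (Real.exp p) ^ 2) ^ 2 ≠ 0 := by
      have hlt : Real.exp p < Real.exp q := Real.exp_lt_exp.mpr hpq
      have : (Real.exp q) ^ 2 - (Real.exp p) ^ 2 ≠ 0 := by nlinarith
      exact pow_ne_zero 2 this
    rcases mul_eq_zero.mp key with h1 | h1
    · exact (pow_eq_zero_iff two_ne_zero).mp h1
    · exact absurd h1 hne2
  refine ⟨Real.log b.im, ?_, ?_, ?_⟩
  rotate_left 2
  · apply UpperHalfPlane.ext
    apply Complex.ext
    · rw [HPt_coe]; simpa [coe_re] using hre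
    · rw [HPt_coe]; simpa [coe_im] using (Real.exp_log b.im_pos).symm
  all_goals {
    have hb : b = HPt (Real.log b.im) := by
      apply UpperHalfPlane.ext
      apply Complex.ext
      · rw [HPt_coe]; simpa [coe_re] using hre
      · rw [HPt_coe]; simpa [coe_im] using (Real.exp_log b.im_pos).symm
    rw [hb, HPt_dist, HPt_dist] at h
    rcases abs_cases (p - Real.log b.im) with ⟨e1, _⟩ | ⟨e1, _⟩ <;>
      rcases abs_cases (Real.log b.im - q) with ⟨e2, _⟩ | ⟨e2, _⟩ <;> linarith
  }

/-- The inversion `z ↦ -1/z` of the upper half-plane. -/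
noncomputable def JMap (z : UpperHalfPlane) : UpperHalfPlane :=
  mk (-(z : ℂ))⁻¹ z.im_inv_neg_coe_pos

lemma JMap_coe (z : UpperHalfPlane) : (JMap z : ℂ) = (-(z : ℂ))⁻¹ := rfl

lemma JMap_re (z : UpperHalfPlane) : (JMap z).re = -z.re / Complex.normSq (z : ℂ) := by
  have : (JMap z : ℂ).re = ((-(z : ℂ))⁻¹).re := rfl
  rw [← coe_re, this, Complex.inv_re, Complex.normSq_neg, Complex.neg_re, coe_re]

lemma JMap_im (z : UpperHalfPlane) : (JMap z).im = z.im / Complex.normSq (z : ℂ) := by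
  have : (JMap z : ℂ).im = ((-(z : ℂ))⁻¹).im := rfl
  rw [← coe_im, this, Complex.inv_im, Complex.normSq_neg, Complex.neg_im, coe_im, neg_neg]

lemma JMap_isometry : Isometry JMap := by
  refine Isometry.of_dist_eq fun z w => ?_
  rw [UpperHalfPlane.dist_eq, UpperHalfPlane.dist_eq]
  congr 1
  have hz : (z : ℂ) ≠ 0 := z.ne_zero
  have hw : (w : ℂ) ≠ 0 := w.ne_zero
  have h1 : (JMap z : ℂ) - (JMap w : ℂ) = ((z : ℂ) - w) / ((z : ℂ) * w) := by
    rw [JMap_coe, JMap_coe, inv_neg, inv_neg, neg_sub_neg, inv_sub_inv hw hz, mul_comm]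
  have h2 : dist (JMap z : ℂ) (JMap w : ℂ) =
      dist (z : ℂ) (w : ℂ) / (‖(z : ℂ)‖ * ‖(w : ℂ)‖) := by
    rw [Complex.dist_eq, Complex.dist_eq, h1, norm_div, norm_mul]
  have h3 : (JMap z).im * (JMap w).im =
      z.im * w.im * ((‖(z : ℂ)‖ * ‖(w : ℂ)‖)⁻¹) ^ 2 := by
    rw [JMap_im, JMap_im, Complex.normSq_eq_norm_sq, Complex.normSq_eq_norm_sq]
    field_simp
  have habs : 0 < ‖(z : ℂ)‖ * ‖(w : ℂ)‖ := by
    have := norm_pos_iff.mpr hz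
    have := norm_pos_iff.mpr hw
    positivity
  rw [h2, h3, Real.sqrt_mul (by positivity), Real.sqrt_sq (by positivity)]
  congr 1
  field_simp

/-- Any two points of `ℍ` can be moved to the imaginary axis by an isometry. -/
lemma exists_iso0 (a b : UpperHalfPlane) :
    ∃ g : UpperHalfPlane → UpperHalfPlane, Isometry g ∧ (g a).re = 0 ∧ (g b).re = 0 := by
  by_cases hab : a.re = b.re
  · refine ⟨((-a.re) +ᵥ · : UpperHalfPlane → UpperHalfPlane), isometry_real_vadd _, ?_, ?_⟩
    · simp
    · simp [← hab]
  · have hd : a.re - b.re ≠ 0 := sub_ne_zero_of_ne hab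
    set c : ℝ := ((a.re ^ 2 + a.im ^ 2) - (b.re ^ 2 + b.im ^ 2)) / (2 * (a.re - b.re)) with hc
    set ρ : ℝ := Real.sqrt ((a.re - c) ^ 2 + a.im ^ 2) with hρ
    have hρpos : 0 < ρ := Real.sqrt_pos.mpr (by positivity)
    have hca : (a.re - c) ^ 2 + a.im ^ 2 = ρ ^ 2 := (Real.sq_sqrt (by positivity)).symm
    have hcb : (b.re - c) ^ 2 + b.im ^ 2 = ρ ^ 2 := by
      rw [← hca]
      have : c * (2 * (a.re - b.re)) = (a.re ^ 2 + a.im ^ 2) - (b.re ^ 2 + b.im ^ 2) := by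
        rw [hc]; field_simp
      nlinarith [this]
    set g : UpperHalfPlane → UpperHalfPlane :=
      fun z => (-1 : ℝ) +ᵥ ((⟨2 * ρ, by positivity⟩ : { x : ℝ // 0 < x }) • JMap ((-(c + ρ)) +ᵥ z))
      with hg
    have hgi : Isometry g :=
      (isometry_real_vadd (-1)).comp ((isometry_pos_mul _).comp
        (JMap_isometry.comp (isometry_real_vadd _)))
    have main : ∀ z : UpperHalfPlane, (z.re - c) ^ 2 + z.im ^ 2 = ρ ^ 2 → (g z).re = 0 := by
      intro z hz
      set w : UpperHalfPlane := (-(c + ρ)) +ᵥ z with hw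
      have hwre : w.re = -(c + ρ) + z.re := rfl
      have hwim : w.im = z.im := vadd_im _ _
      have hW : Complex.normSq (w : ℂ) = 2 * ρ * (c + ρ - z.re) := by
        rw [Complex.normSq_apply, coe_re, coe_im, hwre, hwim]
        linear_combination hz
      have hWpos : 0 < Complex.normSq (w : ℂ) := normSq_pos w
      have h2 : c + ρ - z.re ≠ 0 := by
        intro h0; rw [h0, mul_zero] at hW; exact hWpos.ne' (by rw [hW])
      rw [hg]
      simp only [vadd_re, pos_real_re, JMap_re]
      rw [← hw, hW]
      field_simp
      ring
    exact ⟨g, hgi, main a hca, main b hcb⟩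

/-- Any two points of `ℍ` can be moved to the imaginary axis, in increasing order of
imaginary parts, by an isometry. -/
lemma exists_iso (a b : UpperHalfPlane) :
    ∃ g : UpperHalfPlane → UpperHalfPlane,
      Isometry g ∧ (g a).re = 0 ∧ (g b).re = 0 ∧ (g a).im ≤ (g b).im := by
  obtain ⟨g, hgi, ha, hb⟩ := exists_iso0 a b
  have him1 : ∀ z : UpperHalfPlane, z.re = 0 → (JMap z).im = 1 / z.im := by
    intro z hz
    rw [JMap_im, Complex.normSq_apply, coe_re, coe_im, hz]
    rw [mul_zero, zero_add]
    field_simp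
  by_cases him : (g a).im ≤ (g b).im
  · exact ⟨g, hgi, ha, hb, him⟩
  · push_neg at him
    refine ⟨JMap ∘ g, JMap_isometry.comp hgi, ?_, ?_, ?_⟩
    · simp [Function.comp, JMap_re, ha]
    · simp [Function.comp, JMap_re, hb]
    · simp only [Function.comp]
      rw [him1 _ ha, him1 _ hb]
      exact one_div_le_one_div_of_le (g b).im_pos him.le

/-- The final elementary inequality. -/
lemma final_ineq (α β E0 E1 E2 E3 : ℝ) (hα : 0 < α) (hβ : 0 ≤ β)
    (hE0 : 0 < E0) (hE1 : 0 < E1) (hE2 : 0 < E2) (hE3 : 0 < E3)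
    (h01 : E0 ≤ E1) (h12 : E1 < E2) (h23 : E2 ≤ E3)
    (hkey : 2 * (E1 * E2) ≤ E0 * E3)
    (H1 : α * E1 + β * E1⁻¹ ≤ α * E2 + β * E2⁻¹) :
    α * E0 + β * E0⁻¹ ≤ α * E3 + β * E3⁻¹ := by
  have hD : 0 < E2 - E1 := sub_pos.mpr h12
  have hβ' : β ≤ α * (E1 * E2) := by
    have h2 : β * (E1⁻¹ - E2⁻¹) ≤ α * (E2 - E1) := by linarith
    have h3 : E1⁻¹ - E2⁻¹ = (E2 - E1) * (E1⁻¹ * E2⁻¹) := by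
      field_simp
    rw [h3, show β * ((E2 - E1) * (E1⁻¹ * E2⁻¹)) = β * (E1⁻¹ * E2⁻¹) * (E2 - E1) from by ring]
      at h2
    have h5 : β * (E1⁻¹ * E2⁻¹) ≤ α := le_of_mul_le_mul_right h2 hD
    calc β = β * (E1⁻¹ * E2⁻¹) * (E1 * E2) := by field_simp
      _ ≤ α * (E1 * E2) := mul_le_mul_of_nonneg_right h5 (by positivity)
  have c1 : β * E0⁻¹ ≤ α * (E1 * E2) * E0⁻¹ :=
    mul_le_mul_of_nonneg_right hβ' (by positivity)
  have c2 : α * E0 ≤ α * (E1 * E2) * E0⁻¹ := by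
    have h6 : E0 * E0 ≤ E1 * E2 := mul_le_mul h01 (le_trans h01 h12.le) hE0.le hE1.le
    have h7 : E0 ≤ E1 * E2 * E0⁻¹ := by
      rw [← div_eq_mul_inv, le_div_iff₀ hE0]
      exact h6
    calc α * E0 ≤ α * (E1 * E2 * E0⁻¹) := mul_le_mul_of_nonneg_left h7 hα.le
      _ = α * (E1 * E2) * E0⁻¹ := by ring
  have c3 : α * (E1 * E2) * E0⁻¹ + α * (E1 * E2) * E0⁻¹ ≤ α * E3 := by
    have h7 : 2 * (E1 * E2) * E0⁻¹ ≤ E3 := by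
      rw [← div_eq_mul_inv, div_le_iff₀ hE0]
      linarith [hkey]
    calc α * (E1 * E2) * E0⁻¹ + α * (E1 * E2) * E0⁻¹ = α * (2 * (E1 * E2) * E0⁻¹) := by ring
      _ ≤ α * E3 := mul_le_mul_of_nonneg_left h7 hα.le
  have c4 : 0 ≤ β * E3⁻¹ := by positivity
  linarith

end BisectorAux

/-- Corollary 3.2 (cor:2bisectors) for the hyperbolic plane: if `x, x₊, x̂₊, x₊'` lie
in this order on a common geodesic and `dist x̂₊ x₊' ≥ dist x x₊ + 2 arccosh √2`, then
the half-space `H(x₊, x̂₊)` is contained in the half-space `H(x, x₊')`. -/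
theorem halfspace_nested (x xp xhp xp' : UpperHalfPlane) (hne : xp ≠ xhp)
    (horder : dist x xp + dist xp xhp + dist xhp xp' = dist x xp')
    (hlen : dist xhp xp' ≥ dist x xp + 2 * Real.log (1 + Real.sqrt 2)) :
    ∀ z : UpperHalfPlane, dist z xp ≤ dist z xhp → dist z x ≤ dist z xp' := by
  obtain ⟨g, hgi, hra, hrb, him⟩ := exists_iso x xp'
  set t0 := Real.log (g x).im with ht0
  set t3 := Real.log (g xp').im with ht3
  have hgx : g x = HPt t0 := by
    apply UpperHalfPlane.ext; apply Complex.ext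
    · rw [HPt_coe]; simpa [coe_re] using hra
    · rw [HPt_coe]; simpa [coe_im] using (Real.exp_log (g x).im_pos).symm
  have hgx' : g xp' = HPt t3 := by
    apply UpperHalfPlane.ext; apply Complex.ext
    · rw [HPt_coe]; simpa [coe_re] using hrb
    · rw [HPt_coe]; simpa [coe_im] using (Real.exp_log (g xp').im_pos).symm
  have h03 : t0 ≤ t3 := Real.log_le_log (g x).im_pos him
  have hdpp : dist xp xhp + dist xhp xp' = dist xp xp' := by
    have T1 := dist_triangle xp xhp xp'
    have T2 := dist_triangle x xp xp'
    linarith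
  have hpos12 : 0 < dist xp xhp := dist_pos.mpr hne
  have hd03 : dist x xp' = t3 - t0 := by
    rw [← hgi.dist_eq x xp', hgx, hgx', HPt_dist, abs_of_nonpos (by linarith), neg_sub]
  have h03' : t0 < t3 := by
    have := dist_nonneg (x := x) (y := xp)
    have := dist_nonneg (x := xhp) (y := xp')
    linarith
  have h1 : dist (HPt t0) (g xp) + dist (g xp) (HPt t3) = t3 - t0 := by
    rw [← hgx, ← hgx', hgi.dist_eq, hgi.dist_eq]
    linarith
  obtain ⟨t1, h01, h13, hgxp⟩ := axis_between h03' (g xp) h1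
  have h13' : t1 < t3 := by
    have hd13 : dist xp xp' = t3 - t1 := by
      rw [← hgi.dist_eq xp xp', hgxp, hgx', HPt_dist, abs_of_nonpos (by linarith), neg_sub]
    have := dist_nonneg (x := xhp) (y := xp')
    linarith
  have h2 : dist (HPt t1) (g xhp) + dist (g xhp) (HPt t3) = t3 - t1 := by
    rw [← hgxp, ← hgx', hgi.dist_eq, hgi.dist_eq]
    have hd13 : dist xp xp' = t3 - t1 := by
      rw [← hgi.dist_eq xp xp', hgxp, hgx', HPt_dist, abs_of_nonpos (by linarith), neg_sub]
    linarith
  obtain ⟨t2, h12, h23, hgxhp⟩ := axis_between h13' (g xhp) h2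
  have hd01 : dist x xp = t1 - t0 := by
    rw [← hgi.dist_eq x xp, hgx, hgxp, HPt_dist, abs_of_nonpos (by linarith), neg_sub]
  have hd12 : dist xp xhp = t2 - t1 := by
    rw [← hgi.dist_eq xp xhp, hgxp, hgxhp, HPt_dist, abs_of_nonpos (by linarith), neg_sub]
  have hd23 : dist xhp xp' = t3 - t2 := by
    rw [← hgi.dist_eq xhp xp', hgxhp, hgx', HPt_dist, abs_of_nonpos (by linarith), neg_sub]
  have h12' : t1 < t2 := by linarith
  have hL : (t1 - t0) + 2 * Real.log (1 + Real.sqrt 2) ≤ t3 - t2 := by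
    rw [← hd01, ← hd23]; exact hlen
  intro z hz
  have hcosh_iff : ∀ s t : ℝ, dist (g z) (HPt s) ≤ dist (g z) (HPt t) ↔
      Real.cosh (dist (g z) (HPt s)) ≤ Real.cosh (dist (g z) (HPt t)) := by
    intro s t
    rw [Real.cosh_le_cosh, abs_of_nonneg dist_nonneg, abs_of_nonneg dist_nonneg]
  have hz1 : dist (g z) (HPt t1) ≤ dist (g z) (HPt t2) := by
    rw [← hgxp, ← hgxhp, hgi.dist_eq, hgi.dist_eq]
    exact hz
  rw [hcosh_iff, cosh_dist_HPt, cosh_dist_HPt, Real.exp_neg, Real.exp_neg] at hz1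
  have hgoal : dist (g z) (HPt t0) ≤ dist (g z) (HPt t3) := by
    rw [hcosh_iff, cosh_dist_HPt, cosh_dist_HPt, Real.exp_neg, Real.exp_neg]
    have hv : 0 < (g z).im := (g z).im_pos
    have hβ : 0 ≤ Complex.normSq ((g z : UpperHalfPlane) : ℂ) / (2 * (g z).im) :=
      div_nonneg (Complex.normSq_nonneg _) (by positivity)
    have hα : 0 < 1 / (2 * (g z).im) := by positivity
    have hkey : 2 * (Real.exp t1 * Real.exp t2) ≤ Real.exp t0 * Real.exp t3 := by
      have hexp : Real.exp ((t1 - t0) + 2 * Real.log (1 + Real.sqrt 2)) ≤ Real.exp (t3 - t2) :=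
        Real.exp_le_exp.mpr hL
      have hs2 : (0:ℝ) < 1 + Real.sqrt 2 := by positivity
      have hsq2 : Real.sqrt 2 ^ 2 = 2 := Real.sq_sqrt (by norm_num)
      have h2le : (2:ℝ) ≤ (1 + Real.sqrt 2) ^ 2 := by nlinarith [Real.sqrt_nonneg 2]
      have hrw : Real.exp ((t1 - t0) + 2 * Real.log (1 + Real.sqrt 2)) =
          Real.exp (t1 - t0) * (1 + Real.sqrt 2) ^ 2 := by
        rw [Real.exp_add, two_mul, Real.exp_add, Real.exp_log hs2]
        ring
      have h4 : 2 * Real.exp (t1 - t0) ≤ Real.exp (t3 - t2) := by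
        have : Real.exp (t1 - t0) * 2 ≤ Real.exp (t1 - t0) * (1 + Real.sqrt 2) ^ 2 :=
          mul_le_mul_of_nonneg_left h2le (Real.exp_pos _).le
        rw [hrw] at hexp
        linarith
      rw [Real.exp_sub, Real.exp_sub, ← mul_div_assoc,
        div_le_div_iff₀ (Real.exp_pos t0) (Real.exp_pos t2)] at h4
      linarith [h4]
    exact final_ineq _ _ _ _ _ _ hα hβ (Real.exp_pos t0) (Real.exp_pos t1) (Real.exp_pos t2)
      (Real.exp_pos t3) (Real.exp_le_exp.mpr h01) (Real.exp_lt_exp.mpr h12')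
      (Real.exp_le_exp.mpr h23) hkey hz1
  rw [← hgi.dist_eq z x, ← hgi.dist_eq z xp', hgx, hgx']
  exact hgoal
end

section
/- For all real numbers t, T with 0 ≤ t ≤ T, one has (1 − tanh(T/2)²) / (1 − tanh(t/2)²) ≤ 4·exp(t − T). -/
/-- Analytic core of Lemma 3.6: `(1 - tanh(T/2)²)/(1 - tanh(t/2)²) ≤ 4 exp (t - T)`
for `0 ≤ t ≤ T`. -/
theorem tanh_ratio_le_exp (t T : ℝ) (h0 : 0 ≤ t) (h1 : t ≤ T) :
    (1 - Real.tanh (T / 2) ^ 2) / (1 - Real.tanh (t / 2) ^ 2) ≤ 4 * Real.exp (t - T) := by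
  have id : ∀ x : ℝ, 1 - Real.tanh x ^ 2 = 1 / Real.cosh x ^ 2 := by
    intro x
    have hc := Real.cosh_pos x
    rw [Real.tanh_eq_sinh_div_cosh, div_pow, Real.sinh_sq]
    field_simp
    ring
  rw [id, id]
  have hct := Real.cosh_pos (t / 2)
  have hcT := Real.cosh_pos (T / 2)
  have h2 : (1 / Real.cosh (T / 2) ^ 2) / (1 / Real.cosh (t / 2) ^ 2)
      = Real.cosh (t / 2) ^ 2 / Real.cosh (T / 2) ^ 2 := by
    field_simp
  rw [h2]
  -- cosh(t/2) ≤ exp(t/2)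
  have hub : Real.cosh (t / 2) ≤ Real.exp (t / 2) := by
    rw [Real.cosh_eq]
    have : Real.exp (-(t / 2)) ≤ Real.exp (t / 2) := by
      apply Real.exp_le_exp.2; linarith
    linarith
  have hlb : Real.exp (T / 2) / 2 ≤ Real.cosh (T / 2) := by
    rw [Real.cosh_eq]
    have := (Real.exp_pos (-(T / 2))).le
    linarith
  have hdiv : Real.cosh (t / 2) ^ 2 / Real.cosh (T / 2) ^ 2
      ≤ Real.exp (t / 2) ^ 2 / (Real.exp (T / 2) / 2) ^ 2 := by
    apply div_le_div₀ (by positivity) (by nlinarith) (by positivity)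
    nlinarith [Real.exp_pos (T / 2)]
  refine hdiv.trans (le_of_eq ?_)
  have e1 : Real.exp (t / 2) ^ 2 = Real.exp t := by
    rw [sq, ← Real.exp_add]; ring_nf
  have e2 : (Real.exp (T / 2) / 2) ^ 2 = Real.exp T / 4 := by
    rw [div_pow, sq, ← Real.exp_add]; norm_num
  rw [e1, e2, Real.exp_sub, div_div_eq_mul_div]
  ring
end

section
/- Let ℍ be the hyperbolic plane (the upper half-plane with its hyperbolic metric), and let D ≥ 0 and c(D) := 8π·tanh(D/4)/(1 − tanh(D/4)²). Let A, B, C ∈ ℍ satisfy dist(A,C) = dist(B,C) and dist(A,B) ≤ D, and let τ ≥ 0. Suppose A' lies between A and C with dist(A,A') = τ (i.e. dist(A,A') + dist(A',C) = dist(A,C) and dist(A,A') = τ), and similarly B' lies between B and C with dist(B,B') = τ. Then dist(A',B') ≤ c(D)·exp(−τ). -/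
open UpperHalfPlane

/-- The constant `c(D) = 8π tanh(D/4) / (1 - tanh(D/4)²)` from Lemma 3.6. -/
noncomputable def cFun (D : ℝ) : ℝ :=
  8 * Real.pi * Real.tanh (D / 4) / (1 - Real.tanh (D / 4) ^ 2)

lemma cFun_eq (D : ℝ) : cFun D = 4 * Real.pi * Real.sinh (D / 2) := by
  have hc : Real.cosh (D / 4) ≠ 0 := (Real.cosh_pos (D / 4)).ne'
  have h2 : Real.sinh (D / 2) = 2 * Real.sinh (D / 4) * Real.cosh (D / 4) := by
    rw [show (D / 2 : ℝ) = 2 * (D / 4) by ring, Real.sinh_two_mul]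
  have hden : 1 - Real.tanh (D / 4) ^ 2 = 1 / Real.cosh (D / 4) ^ 2 := by
    rw [Real.tanh_eq_sinh_div_cosh]
    field_simp
    linarith [Real.cosh_sq (D / 4)]
  rw [cFun, hden, h2, Real.tanh_eq_sinh_div_cosh]
  field_simp
  ring

/-- Squared version of `sinh_half_dist`. -/
lemma sinh_sq_half_dist (z w : ℍ) :
    Real.sinh (dist z w / 2) ^ 2 * (4 * z.im * w.im)
      = (z.re - w.re) ^ 2 + (z.im - w.im) ^ 2 := by
  have him : (0:ℝ) < z.im * w.im := mul_pos z.im_pos w.im_pos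
  have hd : dist (z : ℂ) (w : ℂ) ^ 2 = (z.re - w.re) ^ 2 + (z.im - w.im) ^ 2 := by
    rw [Complex.dist_eq_re_im, Real.sq_sqrt (by positivity)]
    simp [UpperHalfPlane.coe_re, UpperHalfPlane.coe_im]
  rw [UpperHalfPlane.sinh_half_dist, div_pow, mul_pow, Real.sq_sqrt him.le, hd]
  field_simp
  ring

set_option maxHeartbeats 1000000 in
/-- The point `p` lying between `z` and `c` at distance `s` from `c` and `t` from `z`
is a tangency point of two circles; its coordinates are an explicit convex combination. -/
lemma tangent_point (s t : ℝ) (hs : 0 ≤ s) (ht : 0 ≤ t) (c z p : ℍ)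
    (h1 : dist p c = s) (h2 : dist z p = t) (h3 : dist z c = s + t) :
    p.re * (c.im * Real.sinh s + z.im * Real.sinh t)
        = c.im * Real.sinh s * z.re + z.im * Real.sinh t * c.re ∧
    p.im * (c.im * Real.sinh s + z.im * Real.sinh t)
        = c.im * z.im * Real.sinh (s + t) := by
  have H1' := UpperHalfPlane.cosh_dist' p c
  rw [h1, eq_div_iff (by positivity : (2 : ℝ) * p.im * c.im ≠ 0)] at H1'
  have H1 : (p.re - c.re) ^ 2 + (p.im - c.im) ^ 2
      = 2 * p.im * c.im * (Real.cosh s - 1) := by linear_combination -H1'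
  have H2' := UpperHalfPlane.cosh_dist' z p
  rw [h2, eq_div_iff (by positivity : (2 : ℝ) * z.im * p.im ≠ 0)] at H2'
  have H2 : (z.re - p.re) ^ 2 + (z.im - p.im) ^ 2
      = 2 * z.im * p.im * (Real.cosh t - 1) := by linear_combination -H2'
  have H3' := UpperHalfPlane.cosh_dist' z c
  rw [h3, Real.cosh_add, eq_div_iff (by positivity : (2 : ℝ) * z.im * c.im ≠ 0)] at H3'
  have H3 : (z.re - c.re) ^ 2 + (z.im - c.im) ^ 2
      = 2 * z.im * c.im * (Real.cosh s * Real.cosh t + Real.sinh s * Real.sinh t - 1) := by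
    linear_combination -H3'
  have rS : Real.cosh s ^ 2 = Real.sinh s ^ 2 + 1 := Real.cosh_sq s
  have rT : Real.cosh t ^ 2 = Real.sinh t ^ 2 + 1 := Real.cosh_sq t
  have e1 : (p.re - c.re) ^ 2 + (p.im - c.im * Real.cosh s) ^ 2
      = (c.im * Real.sinh s) ^ 2 := by linear_combination H1 + c.im ^ 2 * rS
  have e2 : (z.re - p.re) ^ 2 + (z.im * Real.cosh t - p.im) ^ 2
      = (z.im * Real.sinh t) ^ 2 := by linear_combination H2 + z.im ^ 2 * rT
  have e3 : (z.re - c.re) ^ 2 + (z.im * Real.cosh t - c.im * Real.cosh s) ^ 2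
      = (c.im * Real.sinh s + z.im * Real.sinh t) ^ 2 := by
    linear_combination H3 + z.im ^ 2 * rT + c.im ^ 2 * rS
  set r1 : ℝ := c.im * Real.sinh s with hr1
  set r2 : ℝ := z.im * Real.sinh t with hr2
  have hQ : (r2 * (p.re - c.re) - r1 * (z.re - p.re)) ^ 2
      + (r2 * (p.im - c.im * Real.cosh s) - r1 * (z.im * Real.cosh t - p.im)) ^ 2 = 0 := by
    linear_combination (r2 ^ 2 + r1 * r2) * e1 + (r1 ^ 2 + r1 * r2) * e2 - r1 * r2 * e3
  have hX : r2 * (p.re - c.re) - r1 * (z.re - p.re) = 0 := by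
    have h := sq_nonneg (r2 * (p.im - c.im * Real.cosh s) - r1 * (z.im * Real.cosh t - p.im))
    have h' := sq_nonneg (r2 * (p.re - c.re) - r1 * (z.re - p.re))
    have : (r2 * (p.re - c.re) - r1 * (z.re - p.re)) ^ 2 = 0 := by linarith
    exact sq_eq_zero_iff.mp this
  have hY : r2 * (p.im - c.im * Real.cosh s) - r1 * (z.im * Real.cosh t - p.im) = 0 := by
    have h' := sq_nonneg (r2 * (p.re - c.re) - r1 * (z.re - p.re))
    have h'' := sq_nonneg (r2 * (p.im - c.im * Real.cosh s) - r1 * (z.im * Real.cosh t - p.im))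
    have : (r2 * (p.im - c.im * Real.cosh s) - r1 * (z.im * Real.cosh t - p.im)) ^ 2 = 0 := by
      linarith
    exact sq_eq_zero_iff.mp this
  constructor
  · linear_combination hX
  · rw [Real.sinh_add]
    linear_combination hY

set_option maxHeartbeats 2000000 in
/-- Key comparison: in an isosceles configuration, moving distance `τ` towards the apex `C`
multiplies `sinh` of the half-distance by `sinh (L - τ) / sinh L`. -/
lemma key_identity (τ L : ℝ) (hτ : 0 ≤ τ) (hL : 0 < L) (hτL : τ ≤ L)
    (A B C A' B' : ℍ) (hAC : dist A C = L) (hBC : dist B C = L)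
    (hA'C : dist A' C = L - τ) (hAA' : dist A A' = τ)
    (hB'C : dist B' C = L - τ) (hBB' : dist B B' = τ) :
    Real.sinh (dist A' B' / 2) * Real.sinh L
      = Real.sinh (dist A B / 2) * Real.sinh (L - τ) := by
  set s : ℝ := L - τ with hs_def
  have hs : 0 ≤ s := by simp only [hs_def]; linarith
  have hsum : s + τ = L := by simp only [hs_def]; ring
  have h3A : dist A C = s + τ := by rw [hAC, hsum]
  have h3B : dist B C = s + τ := by rw [hBC, hsum]
  obtain ⟨hA1, hA2⟩ := tangent_point s τ hs hτ C A A' hA'C hAA' h3A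
  obtain ⟨hB1, hB2⟩ := tangent_point s τ hs hτ C B B' hB'C hBB' h3B
  rw [Real.sinh_add] at hA2 hB2
  set Ss : ℝ := Real.sinh s with hSs_def
  set Cs : ℝ := Real.cosh s with hCs_def
  set St : ℝ := Real.sinh τ with hSt_def
  set Ct : ℝ := Real.cosh τ with hCt_def
  have hSsn : 0 ≤ Ss := Real.sinh_nonneg_iff.mpr hs
  have hStn : 0 ≤ St := Real.sinh_nonneg_iff.mpr hτ
  have hDA : 0 < C.im * Ss + A.im * St := by
    rcases hτ.lt_or_eq with h | h
    · have h1 : 0 < St := by rw [hSt_def]; exact Real.sinh_pos_iff.mpr h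
      have h2 : 0 ≤ C.im * Ss := mul_nonneg C.im_pos.le hSsn
      nlinarith [A.im_pos]
    · have hs' : 0 < s := by simp only [hs_def]; linarith
      have h1 : 0 < Ss := by rw [hSs_def]; exact Real.sinh_pos_iff.mpr hs'
      have h2 : 0 ≤ A.im * St := mul_nonneg A.im_pos.le hStn
      nlinarith [C.im_pos]
  have hDB : 0 < C.im * Ss + B.im * St := by
    rcases hτ.lt_or_eq with h | h
    · have h1 : 0 < St := by rw [hSt_def]; exact Real.sinh_pos_iff.mpr h
      have h2 : 0 ≤ C.im * Ss := mul_nonneg C.im_pos.le hSsn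
      nlinarith [B.im_pos]
    · have hs' : 0 < s := by simp only [hs_def]; linarith
      have h1 : 0 < Ss := by rw [hSs_def]; exact Real.sinh_pos_iff.mpr hs'
      have h2 : 0 ≤ B.im * St := mul_nonneg B.im_pos.le hStn
      nlinarith [C.im_pos]
  -- constraint equations for A and B relative to C
  have HA' := UpperHalfPlane.cosh_dist' A C
  rw [h3A, Real.cosh_add, eq_div_iff (by positivity : (2 : ℝ) * A.im * C.im ≠ 0)] at HA'
  have hA3 : (A.re - C.re) ^ 2 + (A.im - C.im) ^ 2
      = 2 * A.im * C.im * (Cs * Ct + Ss * St - 1) := by linear_combination -HA'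
  have HB' := UpperHalfPlane.cosh_dist' B C
  rw [h3B, Real.cosh_add, eq_div_iff (by positivity : (2 : ℝ) * B.im * C.im ≠ 0)] at HB'
  have hB3 : (B.re - C.re) ^ 2 + (B.im - C.im) ^ 2
      = 2 * B.im * C.im * (Cs * Ct + Ss * St - 1) := by linear_combination -HB'
  have rS : Cs ^ 2 = Ss ^ 2 + 1 := Real.cosh_sq s
  have rT : Ct ^ 2 = St ^ 2 + 1 := Real.cosh_sq τ
  -- abbreviations
  set DA : ℝ := C.im * Ss + A.im * St with hDA_def
  set DB : ℝ := C.im * Ss + B.im * St with hDB_def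
  set NA1 : ℝ := C.im * Ss * A.re + A.im * St * C.re with hNA1_def
  set NB1 : ℝ := C.im * Ss * B.re + B.im * St * C.re with hNB1_def
  set SL : ℝ := Ss * Ct + Cs * St with hSL_def
  have hre : (A'.re - B'.re) * (DA * DB) = NA1 * DB - NB1 * DA := by
    linear_combination DB * hA1 - DA * hB1
  have him : (A'.im - B'.im) * (DA * DB) = C.im * SL * (A.im * DB - B.im * DA) := by
    linear_combination DB * hA2 - DA * hB2
  have hprod : (A'.im * DA) * (B'.im * DB) = (C.im * A.im * SL) * (C.im * B.im * SL) := by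
    rw [hA2, hB2]
  have hID : (NA1 * DB - NB1 * DA) ^ 2 + C.im ^ 2 * SL ^ 2 * (A.im * DB - B.im * DA) ^ 2
      = C.im ^ 2 * Ss ^ 2 * ((A.re - B.re) ^ 2 + (A.im - B.im) ^ 2) * (DA * DB) := by
    linear_combination (C.im ^ 2 * Ss ^ 2 * St * (B.im - A.im) * DB) * hA3
      + (C.im ^ 2 * Ss ^ 2 * St * (A.im - B.im) * DA) * hB3
      + (C.im ^ 4 * Ss ^ 2 * St ^ 2 * (A.im - B.im) ^ 2) * rS
      + (C.im ^ 4 * Ss ^ 4 * (A.im - B.im) ^ 2) * rT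
  have hsq1 := sinh_sq_half_dist A' B'
  have hsq2 := sinh_sq_half_dist A B
  have hSLpos : 0 < SL := by
    have := Real.sinh_pos_iff.mpr hL
    rw [← hsum, Real.sinh_add] at this
    exact this
  have hGsq : (Real.sinh (dist A' B' / 2) * SL) ^ 2
      = (Real.sinh (dist A B / 2) * Ss) ^ 2 := by
    have hF : (0:ℝ) < 4 * A'.im * B'.im * (DA * DB) ^ 2 := by
      have h1 : (0:ℝ) < 4 * A'.im * B'.im := by positivity
      exact mul_pos h1 (pow_pos (mul_pos hDA hDB) 2)
    refine mul_right_cancel₀ hF.ne' ?_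
    linear_combination (SL ^ 2 * (DA * DB) ^ 2) * hsq1
      + (SL ^ 2 * ((A'.re - B'.re) * (DA * DB) + (NA1 * DB - NB1 * DA))) * hre
      + (SL ^ 2 * ((A'.im - B'.im) * (DA * DB) + C.im * SL * (A.im * DB - B.im * DA))) * him
      + SL ^ 2 * hID
      - (Ss ^ 2 * 4 * Real.sinh (dist A B / 2) ^ 2 * (DA * DB)) * hprod
      - (Ss ^ 2 * SL ^ 2 * C.im ^ 2 * (DA * DB)) * hsq2
  have hSLval : Real.sinh L = SL := by rw [← hsum, Real.sinh_add]
  have h1 : 0 ≤ Real.sinh (dist A' B' / 2) * SL := by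
    have := Real.sinh_nonneg_iff.mpr (by positivity : (0:ℝ) ≤ dist A' B' / 2)
    exact mul_nonneg this hSLpos.le
  have h2 : 0 ≤ Real.sinh (dist A B / 2) * Ss := by
    have := Real.sinh_nonneg_iff.mpr (by positivity : (0:ℝ) ≤ dist A B / 2)
    exact mul_nonneg this hSsn
  rw [hSLval]
  exact (sq_eq_sq₀ h1 h2).mp hGsq

/-- Lemma 3.6 (decrease speed) for the hyperbolic plane: in an isosceles triangle
`ABC` with `dist A C = dist B C` and `dist A B ≤ D`, the points `A', B'` at distance
`τ` from `A, B` along the sides `AC, BC` satisfy `dist A' B' ≤ c(D) exp(-τ)`. -/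
theorem isosceles_decrease_speed (D τ : ℝ) (hD : 0 ≤ D) (hτ : 0 ≤ τ)
    (A B C A' B' : UpperHalfPlane)
    (hiso : dist A C = dist B C) (hAB : dist A B ≤ D)
    (hA' : dist A A' + dist A' C = dist A C) (hAA' : dist A A' = τ)
    (hB' : dist B B' + dist B' C = dist B C) (hBB' : dist B B' = τ) :
    dist A' B' ≤ cFun D * Real.exp (-τ) := by
  have hsinhD : 0 ≤ Real.sinh (D / 2) := Real.sinh_nonneg_iff.mpr (by linarith)
  have hpi : (3:ℝ) < Real.pi := Real.pi_gt_three
  have hcFun : 2 * Real.sinh (D / 2) ≤ cFun D := by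
    rw [cFun_eq]
    nlinarith
  rcases eq_or_lt_of_le (dist_nonneg : (0:ℝ) ≤ dist A C) with h0 | hLpos
  · -- degenerate case : A = B = C, τ = 0
    have h0' : dist A C = 0 := h0.symm
    have hBC0 : dist B C = 0 := by rw [← hiso, h0']
    have h1 : (0:ℝ) ≤ dist A A' := dist_nonneg
    have h2 : (0:ℝ) ≤ dist A' C := dist_nonneg
    have h3 : (0:ℝ) ≤ dist B' C := dist_nonneg
    rw [h0'] at hA'
    have hτ0 : τ = 0 := by rw [← hAA']; linarith
    have hA'C0 : dist A' C = 0 := by linarith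
    have hB'C0 : dist B' C = 0 := by
      rw [hBC0, hBB', hτ0] at hB'
      linarith
    have hA'eq : A' = C := dist_eq_zero.mp hA'C0
    have hB'eq : B' = C := dist_eq_zero.mp hB'C0
    rw [hA'eq, hB'eq, dist_self, hτ0, neg_zero, Real.exp_zero, mul_one]
    nlinarith
  · -- main case : dist A C > 0
    have h2 : (0:ℝ) ≤ dist A' C := dist_nonneg
    have hτL : τ ≤ dist A C := by rw [← hAA']; linarith
    have hA'C : dist A' C = dist A C - τ := by rw [← hAA']; linarith
    have hB'C : dist B' C = dist A C - τ := by
      rw [hiso, ← hBB']; linarith [hB']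
    have hkey := key_identity τ (dist A C) hτ hLpos hτL A B C A' B' rfl hiso.symm
      hA'C hAA' hB'C hBB'
    have hSL : 0 < Real.sinh (dist A C) := Real.sinh_pos_iff.mpr hLpos
    -- sinh (L - τ) ≤ exp (-τ) * sinh L
    have hEa : Real.exp (dist A C - τ) = Real.exp (-τ) * Real.exp (dist A C) := by
      rw [← Real.exp_add]; ring_nf
    have hEb : Real.exp (-τ) * Real.exp (-(dist A C)) ≤ Real.exp (τ - dist A C) := by
      rw [← Real.exp_add]; exact Real.exp_le_exp.mpr (by linarith)
    have hbound : Real.sinh (dist A C - τ) ≤ Real.exp (-τ) * Real.sinh (dist A C) := by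
      rw [Real.sinh_eq, Real.sinh_eq, show -(dist A C - τ) = τ - dist A C by ring, hEa]
      nlinarith [hEb]
    have hsinhAB : 0 ≤ Real.sinh (dist A B / 2) :=
      Real.sinh_nonneg_iff.mpr (by positivity)
    have hstep : Real.sinh (dist A' B' / 2) ≤ Real.exp (-τ) * Real.sinh (D / 2) := by
      have h1 : Real.sinh (dist A' B' / 2) * Real.sinh (dist A C)
          ≤ (Real.sinh (dist A B / 2) * Real.exp (-τ)) * Real.sinh (dist A C) := by
        rw [hkey]
        calc Real.sinh (dist A B / 2) * Real.sinh (dist A C - τ)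
            ≤ Real.sinh (dist A B / 2) * (Real.exp (-τ) * Real.sinh (dist A C)) :=
              mul_le_mul_of_nonneg_left hbound hsinhAB
          _ = (Real.sinh (dist A B / 2) * Real.exp (-τ)) * Real.sinh (dist A C) := by ring
      have h3 : Real.sinh (dist A' B' / 2) ≤ Real.sinh (dist A B / 2) * Real.exp (-τ) :=
        le_of_mul_le_mul_right h1 hSL
      have h4 : Real.sinh (dist A B / 2) ≤ Real.sinh (D / 2) :=
        Real.sinh_le_sinh.mpr (by linarith)
      calc Real.sinh (dist A' B' / 2) ≤ Real.sinh (dist A B / 2) * Real.exp (-τ) := h3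
        _ ≤ Real.sinh (D / 2) * Real.exp (-τ) :=
            mul_le_mul_of_nonneg_right h4 (Real.exp_pos _).le
        _ = Real.exp (-τ) * Real.sinh (D / 2) := by ring
    have hM : 0 ≤ Real.exp (-τ) * Real.sinh (D / 2) := by positivity
    have harsinh : dist A' B' / 2 ≤ Real.exp (-τ) * Real.sinh (D / 2) := by
      have h4 : dist A' B' / 2 = Real.arsinh (Real.sinh (dist A' B' / 2)) :=
        (Real.arsinh_sinh _).symm
      rw [h4]
      have h5 : Real.arsinh (Real.sinh (dist A' B' / 2))
          ≤ Real.arsinh (Real.exp (-τ) * Real.sinh (D / 2)) :=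
        Real.arsinh_le_arsinh.mpr hstep
      refine h5.trans ?_
      have h6 : 0 ≤ Real.arsinh (Real.exp (-τ) * Real.sinh (D / 2)) :=
        Real.arsinh_nonneg_iff.mpr hM
      have h7 := Real.self_le_sinh_iff.mpr h6
      rw [Real.sinh_arsinh] at h7
      exact h7
    have hfin : dist A' B' ≤ 2 * Real.sinh (D / 2) * Real.exp (-τ) := by linarith
    calc dist A' B' ≤ 2 * Real.sinh (D / 2) * Real.exp (-τ) := hfin
      _ ≤ cFun D * Real.exp (-τ) :=
          mul_le_mul_of_nonneg_right hcFun (Real.exp_pos _).le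
end

section
/- Let ℍ be the hyperbolic plane (the upper half-plane with its hyperbolic metric) and let ε > 0. Let g be a bijective self-isometry of ℍ admitting an axis: an isometric embedding γ : ℝ → ℍ and a real l with 0 < l ≤ ε/10 such that g(γ(s)) = γ(s + l) for all s, and τ(g) := ⨅_{x} dist(x, g(x)) = l. Let m be the greatest positive integer with m·l ≤ ε/10. Then the Margulis tube 𝒯_ε(g) := ⋃_{i=1}^{m} {x ∈ ℍ : dist(x, g^i(x)) ≤ ε} is arccosh(√2)-quasiconvex: for all z₁, z₂ ∈ 𝒯_ε(g), every point w with dist(z₁,w) + dist(w,z₂) = dist(z₁,z₂) satisfies infDist(w, 𝒯_ε(g)) ≤ arccosh(√2) = log(1+√2). -/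
open UpperHalfPlane

noncomputable section MTube

namespace MTube

/-- Minkowski bilinear form on `ℝ³ = ℝ × ℝ × ℝ`. -/
def mink (u v : ℝ × ℝ × ℝ) : ℝ := -(u.1 * v.1) + u.2.1 * v.2.1 + u.2.2 * v.2.2

/-- Euclidean dot product on `ℝ³`. -/
def dot3 (u v : ℝ × ℝ × ℝ) : ℝ := u.1 * v.1 + u.2.1 * v.2.1 + u.2.2 * v.2.2

/-- Flip of the first coordinate. -/
def star (u : ℝ × ℝ × ℝ) : ℝ × ℝ × ℝ := (-u.1, u.2.1, u.2.2)

/-- Euclidean cross product on `ℝ³`. -/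
def crossE (a b : ℝ × ℝ × ℝ) : ℝ × ℝ × ℝ :=
  (a.2.1 * b.2.2 - a.2.2 * b.2.1, a.2.2 * b.1 - a.1 * b.2.2, a.1 * b.2.1 - a.2.1 * b.1)

/-- Minkowski "cross product": a vector Minkowski-orthogonal to both arguments. -/
def crossm (a b : ℝ × ℝ × ℝ) : ℝ × ℝ × ℝ := crossE (star a) (star b)

/-- Embedding of the upper half-plane into the hyperboloid in Minkowski 3-space. -/
def phi (z : ℍ) : ℝ × ℝ × ℝ :=
  ((z.re ^ 2 + z.im ^ 2 + 1) / (2 * z.im), z.re / z.im, (z.re ^ 2 + z.im ^ 2 - 1) / (2 * z.im))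

lemma mink_phi (z w : ℍ) : mink (phi z) (phi w) = -Real.cosh (dist z w) := by
  rw [cosh_dist']
  have hz := z.im_pos.ne'
  have hw := w.im_pos.ne'
  simp only [mink, phi]
  field_simp
  ring

lemma mink_phi_self (z : ℍ) : mink (phi z) (phi z) = -1 := by
  rw [mink_phi, dist_self, Real.cosh_zero]

lemma strictlem (V u : ℝ × ℝ × ℝ) (hV : mink V V < 0) (h1 : mink V u = 0)
    (h2 : mink u u ≤ 0) : u = 0 := by
  simp only [mink] at hV h1 h2
  have cs : (V.2.1 * u.2.1 + V.2.2 * u.2.2) ^ 2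
      ≤ (V.2.1 ^ 2 + V.2.2 ^ 2) * (u.2.1 ^ 2 + u.2.2 ^ 2) := by
    nlinarith [sq_nonneg (V.2.1 * u.2.2 - V.2.2 * u.2.1)]
  have hS : u.2.1 ^ 2 + u.2.2 ^ 2 ≤ u.1 ^ 2 := by nlinarith [h2]
  have hq : V.2.1 ^ 2 + V.2.2 ^ 2 < V.1 ^ 2 := by nlinarith [hV]
  have hpa : V.1 ^ 2 * u.1 ^ 2 ≤ (V.2.1 ^ 2 + V.2.2 ^ 2) * u.1 ^ 2 := by
    have h1' : V.1 * u.1 = V.2.1 * u.2.1 + V.2.2 * u.2.2 := by linarith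
    have e1 : V.1 ^ 2 * u.1 ^ 2 = (V.2.1 * u.2.1 + V.2.2 * u.2.2) ^ 2 := by
      rw [← h1']; ring
    have e2 : (V.2.1 ^ 2 + V.2.2 ^ 2) * (u.2.1 ^ 2 + u.2.2 ^ 2)
        ≤ (V.2.1 ^ 2 + V.2.2 ^ 2) * u.1 ^ 2 := by
      have : (0:ℝ) ≤ V.2.1 ^ 2 + V.2.2 ^ 2 := by positivity
      nlinarith [this, hS]
    linarith [e1 ▸ cs]
  have ha : u.1 = 0 := by
    rcases (sq_nonneg u.1).eq_or_lt with h | h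
    · exact sq_eq_zero_iff.mp h.symm
    · exfalso
      have hk : 0 < V.1 ^ 2 - (V.2.1 ^ 2 + V.2.2 ^ 2) := by linarith
      nlinarith [mul_pos hk h]
  have hb : u.2.1 = 0 ∧ u.2.2 = 0 := by
    rw [ha] at h2
    constructor <;> nlinarith [sq_nonneg u.2.1, sq_nonneg u.2.2]
  simp only [Prod.ext_iff]
  refine ⟨by simpa using ha, by simpa using hb.1, by simpa using hb.2⟩

lemma nonneg_of_orth (V u : ℝ × ℝ × ℝ) (hV : mink V V < 0) (h1 : mink V u = 0) :
    0 ≤ mink u u := by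
  by_contra h
  push_neg at h
  have h0 : u = 0 := strictlem V u hV h1 h.le
  rw [h0] at h
  norm_num [mink] at h

lemma eq_of_mink (W P : ℝ × ℝ × ℝ) (k : ℝ) (hk : 0 < k) (hW : mink W W = -k)
    (hP : mink P P = -k) (hWP : mink W P = -k) : W = P := by
  have hVneg : mink W W < 0 := by rw [hW]; linarith
  have h1 : mink W (W - P) = 0 := by
    simp only [mink, Prod.fst_sub, Prod.snd_sub] at *
    linarith
  have h2 : mink (W - P) (W - P) ≤ 0 := by
    simp only [mink, Prod.fst_sub, Prod.snd_sub] at *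
    nlinarith
  exact sub_eq_zero.mp (strictlem W (W - P) hVneg h1 h2)

lemma parallel (A B u : ℝ × ℝ × ℝ) (hA : mink u A = 0) (hB : mink u B = 0) :
    dot3 (crossm A B) (crossm A B) • u = dot3 u (crossm A B) • crossm A B := by
  simp only [mink] at hA hB
  refine Prod.ext ?_ (Prod.ext ?_ ?_)
  · simp only [dot3, crossm, crossE, star, Prod.smul_fst, Prod.smul_snd, smul_eq_mul]
    linear_combination (-((A.1*B.2.2 - A.2.2*B.1)*B.2.2 - (A.2.1*B.1 - A.1*B.2.1)*B.2.1)) * hA + ((A.1*B.2.2 - A.2.2*B.1)*A.2.2 - (A.2.1*B.1 - A.1*B.2.1)*A.2.1) * hB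
  · simp only [dot3, crossm, crossE, star, Prod.smul_fst, Prod.smul_snd, smul_eq_mul]
    linear_combination ((A.2.1*B.1 - A.1*B.2.1)*B.1 + (A.2.1*B.2.2 - A.2.2*B.2.1)*B.2.2) * hA + (-((A.2.1*B.1 - A.1*B.2.1)*A.1) - (A.2.1*B.2.2 - A.2.2*B.2.1)*A.2.2) * hB
  · simp only [dot3, crossm, crossE, star, Prod.smul_fst, Prod.smul_snd, smul_eq_mul]
    linear_combination (-((A.2.1*B.2.2 - A.2.2*B.2.1)*B.2.1 + (A.1*B.2.2 - A.2.2*B.1)*B.1)) * hA + ((A.2.1*B.2.2 - A.2.2*B.2.1)*A.2.1 + (A.1*B.2.2 - A.2.2*B.1)*A.1) * hB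

lemma mink_crossm_self (A B : ℝ × ℝ × ℝ) :
    mink (crossm A B) (crossm A B) = (mink A B) ^ 2 - mink A A * mink B B := by
  simp only [mink, crossm, crossE, star]; ring

lemma crossm_orth_left (A B : ℝ × ℝ × ℝ) : mink (crossm A B) A = 0 := by
  simp only [mink, crossm, crossE, star]; ring

lemma crossm_orth_right (A B : ℝ × ℝ × ℝ) : mink (crossm A B) B = 0 := by
  simp only [mink, crossm, crossE, star]; ring

/- Bilinearity helpers -/
lemma mink_comm (u v : ℝ × ℝ × ℝ) : mink u v = mink v u := by simp only [mink]; ring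

lemma mink_smul_right (r : ℝ) (u v : ℝ × ℝ × ℝ) : mink u (r • v) = r * mink u v := by
  simp only [mink, Prod.smul_fst, Prod.smul_snd, smul_eq_mul]; ring

lemma mink_smul_left (r : ℝ) (u v : ℝ × ℝ × ℝ) : mink (r • u) v = r * mink u v := by
  simp only [mink, Prod.smul_fst, Prod.smul_snd, smul_eq_mul]; ring

lemma mink_add_right (u v w : ℝ × ℝ × ℝ) : mink u (v + w) = mink u v + mink u w := by
  simp only [mink, Prod.fst_add, Prod.snd_add]; ring

lemma mink_add_left (u v w : ℝ × ℝ × ℝ) : mink (u + v) w = mink u w + mink v w := by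
  simp only [mink, Prod.fst_add, Prod.snd_add]; ring

lemma mink_sub_right (u v w : ℝ × ℝ × ℝ) : mink u (v - w) = mink u v - mink u w := by
  simp only [mink, Prod.fst_sub, Prod.snd_sub]; ring

lemma mink_sub_left (u v w : ℝ × ℝ × ℝ) : mink (u - v) w = mink u w - mink v w := by
  simp only [mink, Prod.fst_sub, Prod.snd_sub]; ring

lemma mink_le_dot3 (u : ℝ × ℝ × ℝ) : mink u u ≤ dot3 u u := by
  simp only [mink, dot3]
  nlinarith [sq_nonneg u.1]

attribute [irreducible] mink phi

variable {γ : ℝ → ℍ}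

/-- The unit tangent-ish vector of the axis. -/
def Bvec (γ : ℝ → ℍ) : ℝ × ℝ × ℝ :=
  (Real.sinh 1)⁻¹ • (phi (γ 1) - Real.cosh 1 • phi (γ 0))

lemma sinh_one_ne : Real.sinh 1 ≠ 0 := (Real.sinh_pos_iff.mpr one_pos).ne'

lemma dist_gamma (hγ : Isometry γ) (s t : ℝ) : dist (γ s) (γ t) = |s - t| := by
  rw [hγ.dist_eq, Real.dist_eq]

lemma mink_phi_gamma (hγ : Isometry γ) (s t : ℝ) :
    mink (phi (γ s)) (phi (γ t)) = -Real.cosh (s - t) := by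
  rw [mink_phi, dist_gamma hγ, Real.cosh_abs]

lemma mink_AB (hγ : Isometry γ) : mink (phi (γ 0)) (Bvec γ) = 0 := by
  simp only [Bvec, mink_smul_right, mink_sub_right, mink_phi_gamma hγ, zero_sub, sub_zero,
    sub_self, Real.cosh_neg, Real.cosh_zero]
  ring

lemma mink_BA (hγ : Isometry γ) : mink (Bvec γ) (phi (γ 0)) = 0 := by
  rw [mink_comm]; exact mink_AB hγ

lemma mink_BB (hγ : Isometry γ) : mink (Bvec γ) (Bvec γ) = 1 := by
  simp only [Bvec, mink_smul_right, mink_smul_left, mink_sub_right, mink_sub_left,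
    mink_phi_gamma hγ, zero_sub, sub_zero, sub_self, Real.cosh_neg, Real.cosh_zero]
  have h1 := Real.cosh_sq 1
  have h2 := sinh_one_ne
  field_simp
  nlinarith [h1]

/-- The geodesic `γ` parametrizes the hyperbola `cosh s • A + sinh s • B`. -/
lemma geo (hγ : Isometry γ) (s : ℝ) :
    phi (γ s) = Real.cosh s • phi (γ 0) + Real.sinh s • Bvec γ := by
  have hXA : mink (phi (γ s)) (phi (γ 0)) = -Real.cosh s := by
    rw [mink_phi_gamma hγ]; norm_num
  have hXB : mink (phi (γ s)) (Bvec γ) = Real.sinh s := by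
    simp only [Bvec, mink_smul_right, mink_sub_right, mink_phi_gamma hγ, sub_zero]
    have hc := Real.cosh_sub s 1
    have hs := Real.cosh_sq 1
    have h2 := sinh_one_ne
    field_simp
    nlinarith [hc, hs]
  apply eq_of_mink _ _ 1 one_pos (mink_phi_self _)
  · simp only [mink_add_right, mink_add_left, mink_smul_right, mink_smul_left,
      mink_phi_self, mink_BB hγ, mink_AB hγ, mink_BA hγ]
    nlinarith [Real.cosh_sq s]
  · simp only [mink_add_right, mink_smul_right, hXA, hXB]
    nlinarith [Real.cosh_sq s]

/- Coordinates of a point w.r.t. the axis -/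
def aa (γ : ℝ → ℍ) (x : ℍ) : ℝ := -(mink (phi x) (phi (γ 0)))
def bb (γ : ℝ → ℍ) (x : ℍ) : ℝ := mink (phi x) (Bvec γ)
def vv (γ : ℝ → ℍ) (x : ℍ) : ℝ × ℝ × ℝ := phi x - aa γ x • phi (γ 0) - bb γ x • Bvec γ
def mu (γ : ℝ → ℍ) (x : ℍ) : ℝ := mink (vv γ x) (vv γ x)

lemma pair_gamma (hγ : Isometry γ) (x : ℍ) (t : ℝ) :
    mink (phi x) (phi (γ t)) = -(aa γ x * Real.cosh t) + bb γ x * Real.sinh t := by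
  rw [geo hγ t, mink_add_right, mink_smul_right, mink_smul_right, aa, bb]
  ring

lemma vv_orth_A (hγ : Isometry γ) (x : ℍ) : mink (vv γ x) (phi (γ 0)) = 0 := by
  simp only [vv, mink_sub_left, mink_smul_left, mink_phi_self, mink_BA hγ, aa]
  ring

lemma vv_orth_B (hγ : Isometry γ) (x : ℍ) : mink (vv γ x) (Bvec γ) = 0 := by
  simp only [vv, mink_sub_left, mink_smul_left, mink_BB hγ, mink_AB hγ, bb]
  ring

lemma mink_vv_pair (hγ : Isometry γ) (x y : ℍ) :
    mink (vv γ x) (vv γ y) = mink (phi x) (phi y) + aa γ x * aa γ y - bb γ x * bb γ y := by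
  nth_rewrite 1 [vv]
  rw [mink_sub_left, mink_sub_left, mink_smul_left, mink_smul_left,
    mink_comm (phi (γ 0)) (vv γ y), mink_comm (Bvec γ) (vv γ y),
    vv_orth_A hγ, vv_orth_B hγ]
  nth_rewrite 1 [vv]
  rw [mink_sub_right, mink_sub_right, mink_smul_right, mink_smul_right]
  rw [show mink (phi x) (phi (γ 0)) = -(aa γ x) from by rw [aa]; ring,
    show mink (phi x) (Bvec γ) = bb γ x from rfl]
  ring

lemma mu_eq (hγ : Isometry γ) (x : ℍ) : mu γ x = -1 + aa γ x ^ 2 - bb γ x ^ 2 := by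
  rw [mu, mink_vv_pair hγ, mink_phi_self]; ring

lemma mu_nonneg (hγ : Isometry γ) (x : ℍ) : 0 ≤ mu γ x :=
  nonneg_of_orth (phi (γ 0)) _ (by rw [mink_phi_self]; norm_num)
    (by rw [mink_comm, vv_orth_A hγ])

section Maps

variable {h : ℍ → ℍ} {τ : ℝ}

lemma aa_map (hγ : Isometry γ) (hax : ∀ x t, dist (h x) (γ t) = dist x (γ (t - τ))) (x : ℍ) :
    aa γ (h x) = aa γ x * Real.cosh τ + bb γ x * Real.sinh τ := by
  have e1 : mink (phi (h x)) (phi (γ 0)) = mink (phi x) (phi (γ (0 - τ))) := by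
    rw [mink_phi, mink_phi, hax]
  rw [aa, e1, pair_gamma hγ, zero_sub, Real.cosh_neg, Real.sinh_neg]
  ring

lemma bb_map (hγ : Isometry γ) (hax : ∀ x t, dist (h x) (γ t) = dist x (γ (t - τ))) (x : ℍ) :
    bb γ (h x) = aa γ x * Real.sinh τ + bb γ x * Real.cosh τ := by
  have e1 : mink (phi (h x)) (phi (γ 1)) = mink (phi x) (phi (γ (1 - τ))) := by
    rw [mink_phi, mink_phi, hax]
  have e0 : mink (phi (h x)) (phi (γ 0)) = -(aa γ (h x)) := by rw [aa]; ring
  rw [bb, Bvec, mink_smul_right, mink_sub_right, mink_smul_right, e1, e0,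
    pair_gamma hγ, aa_map hγ hax, Real.cosh_sub, Real.sinh_sub]
  have h1 := Real.cosh_sq 1
  have h2 := sinh_one_ne
  field_simp
  ring

lemma vv_map_pair (hγ : Isometry γ) (hiso : ∀ x y : ℍ, dist (h x) (h y) = dist x y)
    (hax : ∀ x t, dist (h x) (γ t) = dist x (γ (t - τ))) (x y : ℍ) :
    mink (vv γ (h x)) (vv γ (h y)) = mink (vv γ x) (vv γ y) := by
  rw [mink_vv_pair hγ, mink_vv_pair hγ, aa_map hγ hax, aa_map hγ hax, bb_map hγ hax,
    bb_map hγ hax, show mink (phi (h x)) (phi (h y)) = mink (phi x) (phi y) from by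
      rw [mink_phi, mink_phi, hiso]]
  linear_combination (aa γ x * aa γ y - bb γ x * bb γ y) * (Real.cosh_sq τ)

lemma mu_map (hγ : Isometry γ) (hiso : ∀ x y : ℍ, dist (h x) (h y) = dist x y)
    (hax : ∀ x t, dist (h x) (γ t) = dist x (γ (t - τ))) (x : ℍ) :
    mu γ (h x) = mu γ x := by
  rw [mu, mu, vv_map_pair hγ hiso hax]

/-- Displacement formula: the hyperbolic cosine of the displacement of `h`. -/
lemma disp (hγ : Isometry γ) (hax : ∀ x t, dist (h x) (γ t) = dist x (γ (t - τ))) (x : ℍ) :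
    Real.cosh (dist x (h x))
      = (1 + mu γ x) * Real.cosh τ - mink (vv γ x) (vv γ (h x)) := by
  have e : mink (phi x) (phi (h x)) = -Real.cosh (dist x (h x)) := mink_phi _ _
  have e2 := mink_vv_pair hγ x (h x)
  rw [aa_map hγ hax, bb_map hγ hax, e] at e2
  have e3 := mu_eq hγ x
  linear_combination e2 - Real.cosh τ * e3

end Maps

/-- Metric betweenness gives a linear relation in the hyperboloid model. -/
lemma between (z₁ w z₂ : ℍ) (hw : dist z₁ w + dist w z₂ = dist z₁ z₂)
    (hd : 0 < dist z₁ z₂) :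
    Real.sinh (dist z₁ z₂) • phi w
      = Real.sinh (dist w z₂) • phi z₁ + Real.sinh (dist z₁ w) • phi z₂ := by
  set a := dist z₁ w with ha
  set b := dist w z₂ with hb
  have hd2 : dist z₁ z₂ = a + b := hw.symm
  have hsd : 0 < Real.sinh (a + b) := Real.sinh_pos_iff.mpr (hd2 ▸ hd)
  rw [hd2]
  have h1 : mink (phi w) (phi z₁) = -Real.cosh a := by
    rw [mink_phi, dist_comm]
  have h2 : mink (phi w) (phi z₂) = -Real.cosh b := by rw [mink_phi, hb]
  have h12 : mink (phi z₁) (phi z₂) = -Real.cosh (a + b) := by rw [mink_phi, hd2]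
  apply eq_of_mink _ _ ((Real.sinh (a+b))^2) (pow_pos hsd 2)
  · simp only [mink_smul_left, mink_smul_right, mink_phi_self]
    ring
  · simp only [mink_add_right, mink_add_left, mink_smul_left, mink_smul_right,
      mink_phi_self, h12, mink_comm (phi z₂) (phi z₁)]
    rw [Real.sinh_add, Real.cosh_add]
    linear_combination (Real.sinh a)^2 * (Real.cosh_sq b) + (Real.sinh b)^2 * (Real.cosh_sq a)
  · simp only [mink_add_right, mink_smul_left, mink_smul_right, h1, h2]
    linear_combination (Real.sinh (a+b)) * (Real.sinh_add a b)

lemma scalar_quasi (sa sb sd cd muw mu1 mu2 m12 M : ℝ) (hsa0 : 0 ≤ sa) (hsb0 : 0 ≤ sb)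
    (hsd : 0 < sd) (hcd : 1 ≤ cd)
    (em : sd^2*muw = sb^2*mu1 + sa^2*mu2 + 2*sa*sb*m12)
    (e2 : sd^2 = sa^2+sb^2+2*sa*sb*cd)
    (hm12 : m12 ≤ M) (hM1 : mu1 ≤ M) (hM2 : mu2 ≤ M) (hM0 : 0 ≤ M) : muw ≤ M := by
  have hy : 0 ≤ cd * M - m12 := by nlinarith
  have big : sd^2 * muw ≤ sd^2 * M := by
    nlinarith [em, mul_nonneg (sq_nonneg sa) (sub_nonneg.mpr hM2),
      mul_nonneg (sq_nonneg sb) (sub_nonneg.mpr hM1),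
      mul_nonneg (mul_nonneg hsa0 hsb0) hy]
  have hsd2 : 0 < sd^2 := pow_pos hsd 2
  nlinarith [big, hsd2]

/-- Quasiconvexity (in fact convexity) of `mu` along geodesics. -/
lemma mu_between (hγ : Isometry γ) (z₁ w z₂ : ℍ)
    (hw : dist z₁ w + dist w z₂ = dist z₁ z₂) (hd : 0 < dist z₁ z₂) :
    mu γ w ≤ max (mu γ z₁) (mu γ z₂) := by
  set M := max (mu γ z₁) (mu γ z₂) with hM
  set a := dist z₁ w with ha
  set b := dist w z₂ with hb
  set d := dist z₁ z₂ with hdd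
  set sa := Real.sinh a with hsa'
  set sb := Real.sinh b with hsb'
  set sd := Real.sinh d with hsd'
  have hd2 : d = a + b := hw.symm
  have hsd : 0 < sd := by rw [hsd']; exact Real.sinh_pos_iff.mpr hd
  have hsa0 : 0 ≤ sa := by rw [hsa']; exact Real.sinh_nonneg_iff.mpr dist_nonneg
  have hsb0 : 0 ≤ sb := by rw [hsb']; exact Real.sinh_nonneg_iff.mpr dist_nonneg
  have hbet := between z₁ w z₂ hw hd
  -- pair with A and B
  have eA : sd * aa γ w = sb * aa γ z₁ + sa * aa γ z₂ := by
    have h := congrArg (fun u => mink u (phi (γ 0))) hbet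
    simp only [mink_add_left, mink_smul_left] at h
    simp only [aa]
    linarith [h]
  have eB : sd * bb γ w = sb * bb γ z₁ + sa * bb γ z₂ := by
    have h := congrArg (fun u => mink u (Bvec γ)) hbet
    simp only [mink_add_left, mink_smul_left] at h
    simp only [bb]
    linarith [h]
  have e1 : sd^2 * mu γ w = -(sd^2) + (sb * aa γ z₁ + sa * aa γ z₂)^2
      - (sb * bb γ z₁ + sa * bb γ z₂)^2 := by
    linear_combination (sd^2) * (mu_eq hγ w)
      + (sd * aa γ w + (sb * aa γ z₁ + sa * aa γ z₂)) * eA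
      - (sd * bb γ w + (sb * bb γ z₁ + sa * bb γ z₂)) * eB
  have e2 : sd^2 = sa^2 + sb^2 + 2*sa*sb*(Real.cosh d) := by
    rw [hsd', hsa', hsb', hd2, Real.sinh_add, Real.cosh_add]
    linear_combination (Real.sinh a)^2 * (Real.cosh_sq b) + (Real.sinh b)^2 * (Real.cosh_sq a)
  have e3 : aa γ z₁ * aa γ z₂ - bb γ z₁ * bb γ z₂
      = Real.cosh d + mink (vv γ z₁) (vv γ z₂) := by
    have hp := mink_vv_pair hγ z₁ z₂
    have h12 : mink (phi z₁) (phi z₂) = -Real.cosh d := mink_phi _ _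
    linarith [hp, h12]
  have psd : mink (vv γ z₁) (vv γ z₂) ≤ (mu γ z₁ + mu γ z₂) / 2 := by
    have o : mink (phi (γ 0)) (vv γ z₁ - vv γ z₂) = 0 := by
      rw [mink_sub_right, mink_comm (phi (γ 0)) (vv γ z₁), mink_comm (phi (γ 0)) (vv γ z₂),
        vv_orth_A hγ, vv_orth_A hγ, sub_zero]
    have hnn := nonneg_of_orth (phi (γ 0)) _ (by rw [mink_phi_self]; norm_num) o
    have hexp : mink (vv γ z₁ - vv γ z₂) (vv γ z₁ - vv γ z₂)
        = mu γ z₁ - 2 * mink (vv γ z₁) (vv γ z₂) + mu γ z₂ := by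
      simp only [mink_sub_left, mink_sub_right]
      rw [mink_comm (vv γ z₂) (vv γ z₁)]
      simp only [mu]
      ring
    rw [hexp] at hnn
    linarith
  have em : sd^2 * mu γ w = sb^2 * mu γ z₁ + sa^2 * mu γ z₂
      + 2*sa*sb*(mink (vv γ z₁) (vv γ z₂)) := by
    linear_combination e1 - e2 - sb^2 * (mu_eq hγ z₁) - sa^2 * (mu_eq hγ z₂)
      + 2*sa*sb*e3
  have hM1 : mu γ z₁ ≤ M := le_max_left _ _
  have hM2 : mu γ z₂ ≤ M := le_max_right _ _
  have hM0 : 0 ≤ M := le_trans (mu_nonneg hγ z₁) hM1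
  have hcd : 1 ≤ Real.cosh d := Real.one_le_cosh d
  have hx : mink (vv γ z₁) (vv γ z₂) ≤ M := le_trans psd (by linarith)
  exact scalar_quasi sa sb sd (Real.cosh d) (mu γ w) (mu γ z₁) (mu γ z₂)
    (mink (vv γ z₁) (vv γ z₂)) M hsa0 hsb0 hsd hcd em e2 hx hM1 hM2 hM0

lemma dot3_pos_of_mink (u : ℝ × ℝ × ℝ) (h : mink u u = 1) : 0 < dot3 u u := by
  have := mink_le_dot3 u
  linarith

end MTube

end MTube

open MTube

/-- The Margulis tube `𝒯_ε(g) = ⋃_{1 ≤ i ≤ m} {x : dist x (gⁱ x) ≤ ε}` of a hyperbolic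
isometry `g` of the hyperbolic plane. -/
def margulisTube (ε : ℝ) (g : UpperHalfPlane ≃ᵢ UpperHalfPlane) (m : ℕ) :
    Set UpperHalfPlane :=
  ⋃ i ∈ Finset.Icc 1 m, {x : UpperHalfPlane | dist x ((g ^ i) x) ≤ ε}

/-- Corollary 3.8 (qctube), hyperbolic case, for `X = ℍ`: the Margulis tube of a
hyperbolic isometry with translation length `l ≤ ε/10` is
`arccosh √2 = log (1+√2)`-quasiconvex. -/
theorem margulisTube_quasiconvex (ε : ℝ) (hε : 0 < ε)
    (g : UpperHalfPlane ≃ᵢ UpperHalfPlane) (γ : ℝ → UpperHalfPlane) (hγ : Isometry γ)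
    (l : ℝ) (hl0 : 0 < l) (hl : l ≤ ε / 10)
    (htrans : ∀ s : ℝ, g (γ s) = γ (s + l))
    (hτ : (⨅ x : UpperHalfPlane, dist x (g x)) = l)
    (m : ℕ) (hm1 : 1 ≤ m) (hm : (m : ℝ) * l ≤ ε / 10) (hm' : ε / 10 < ((m : ℝ) + 1) * l) :
    ∀ z₁ ∈ margulisTube ε g m, ∀ z₂ ∈ margulisTube ε g m, ∀ w : UpperHalfPlane,
      dist z₁ w + dist w z₂ = dist z₁ z₂ →
        Metric.infDist w (margulisTube ε g m) ≤ Real.log (1 + Real.sqrt 2) := by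
  classical
  -- powers of g translate the axis
  have hgpow : ∀ (i : ℕ) (s : ℝ), (g ^ i) (γ s) = γ (s + (i : ℝ) * l) := by
    intro i
    induction i with
    | zero => intro s; simp
    | succ n ih =>
      intro s
      rw [pow_succ', IsometryEquiv.mul_apply, ih, htrans]
      congr 1
      push_cast
      ring
  have hiso : ∀ (i : ℕ) (x y : ℍ), dist ((g ^ i) x) ((g ^ i) y) = dist x y :=
    fun i x y => (g ^ i).dist_eq x y
  have hax : ∀ (i : ℕ) (x : ℍ) (t : ℝ),
      dist ((g ^ i) x) (γ t) = dist x (γ (t - (i : ℝ) * l)) := by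
    intro i x t
    have e : γ t = (g ^ i) (γ (t - (i : ℝ) * l)) := by rw [hgpow]; congr 1; ring
    rw [e, hiso]
  -- the normal direction
  set N := crossm (phi (γ 0)) (Bvec γ) with hN
  have hNN : mink N N = 1 := by
    rw [hN, mink_crossm_self, mink_AB hγ, mink_phi_self, mink_BB hγ]
    norm_num
  have hdNN : 0 < dot3 N N := dot3_pos_of_mink N hNN
  set Λ : ℍ → ℝ := fun x => dot3 (vv γ x) N / dot3 N N with hΛ
  have hvN : ∀ x : ℍ, vv γ x = Λ x • N := by
    intro x
    have hpar := parallel (phi (γ 0)) (Bvec γ) (vv γ x) (vv_orth_A hγ x) (vv_orth_B hγ x)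
    rw [← hN] at hpar
    calc vv γ x = (dot3 N N)⁻¹ • (dot3 N N • vv γ x) := by
          rw [smul_smul, inv_mul_cancel₀ hdNN.ne', one_smul]
      _ = (dot3 N N)⁻¹ • (dot3 (vv γ x) N • N) := by rw [hpar]
      _ = Λ x • N := by rw [smul_smul, hΛ]; congr 1; field_simp
  have hpair : ∀ x y : ℍ, mink (vv γ x) (vv γ y) = Λ x * Λ y := by
    intro x y
    rw [hvN x, hvN y, mink_smul_left, mink_smul_right, hNN]
    ring
  have hmu : ∀ x : ℍ, mu γ x = Λ x ^ 2 := fun x => by rw [mu, hpair]; ring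
  have hinv : ∀ x y : ℍ, Λ (g x) * Λ (g y) = Λ x * Λ y := by
    intro x y
    have hax1 : ∀ (x : ℍ) (t : ℝ), dist (g x) (γ t) = dist x (γ (t - l)) := by
      intro x t
      have := hax 1 x t
      simpa using this
    have hiso1 : ∀ x y : ℍ, dist (g x) (g y) = dist x y := fun x y => g.dist_eq x y
    rw [← hpair, ← hpair, vv_map_pair hγ hiso1 hax1]
  obtain ⟨c, hc2, hcg⟩ : ∃ c : ℝ, c ^ 2 = 1 ∧ ∀ y, Λ (g y) = c * Λ y := by
    by_cases hall : ∀ y, Λ y = 0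
    · refine ⟨1, by norm_num, fun y => ?_⟩
      have h0 : Λ (g y) * Λ (g y) = 0 := by rw [hinv y y, hall y]; ring
      rw [hall y, mul_zero, mul_self_eq_zero.mp h0]
    · push_neg at hall
      obtain ⟨x₀, hx₀⟩ := hall
      have h2 : Λ (g x₀) * Λ (g x₀) = Λ x₀ * Λ x₀ := hinv x₀ x₀
      have hgx₀ : Λ (g x₀) ≠ 0 := by
        intro h0
        rw [h0, zero_mul] at h2
        exact hx₀ (mul_self_eq_zero.mp h2.symm)
      refine ⟨Λ (g x₀) / Λ x₀, ?_, ?_⟩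
      · rw [div_pow, div_eq_one_iff_eq (pow_ne_zero 2 hx₀)]
        linear_combination h2
      · intro y
        by_cases hy : Λ y = 0
        · have h0 : Λ (g y) * Λ (g y) = 0 := by rw [hinv y y, hy]; ring
          rw [hy, mul_zero, mul_self_eq_zero.mp h0]
        · have h := hinv x₀ y
          rw [div_mul_eq_mul_div, eq_div_iff hx₀]
          apply mul_left_cancel₀ hgx₀
          linear_combination Λ x₀ * h - Λ y * h2
  have hΛpow : ∀ (i : ℕ) (x : ℍ), Λ ((g ^ i) x) = c ^ i * Λ x := by
    intro i
    induction i with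
    | zero => intro x; simp
    | succ n ih =>
      intro x
      rw [pow_succ', IsometryEquiv.mul_apply, hcg, ih, pow_succ']
      ring
  have hdisp : ∀ (i : ℕ) (x : ℍ), Real.cosh (dist x ((g ^ i) x))
      = Real.cosh ((i : ℝ) * l) + mu γ x * (Real.cosh ((i : ℝ) * l) - c ^ i) := by
    intro i x
    have hd := disp hγ (hax i) x
    rw [hd, hpair x ((g ^ i) x), hΛpow i x]
    linear_combination (c ^ i) * (hmu x)
  have hcile : ∀ i : ℕ, c ^ i ≤ 1 := by
    intro i
    have hc : c = 1 ∨ c = -1 := mul_self_eq_one_iff.mp (by linear_combination hc2)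
    rcases hc with h | h
    · rw [h, one_pow]
    · rcases Nat.even_or_odd i with he | ho
      · rw [h, he.neg_one_pow]
      · rw [h, ho.neg_one_pow]; norm_num
  have hcrit : ∀ (i : ℕ) (x y : ℍ), mu γ x ≤ mu γ y →
      dist y ((g ^ i) y) ≤ ε → dist x ((g ^ i) x) ≤ ε := by
    intro i x y hmuxy hy
    have h1 := hdisp i x
    have h2 := hdisp i y
    have hch : 1 ≤ Real.cosh ((i : ℝ) * l) := Real.one_le_cosh _
    have hcc : Real.cosh (dist x ((g ^ i) x)) ≤ Real.cosh (dist y ((g ^ i) y)) := by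
      rw [h1, h2]
      nlinarith [hcile i, mu_nonneg hγ x]
    have hey : Real.cosh (dist y ((g ^ i) y)) ≤ Real.cosh ε :=
      Real.cosh_le_cosh.mpr (by rw [abs_of_nonneg dist_nonneg, abs_of_nonneg hε.le]; exact hy)
    have := Real.cosh_le_cosh.mp (le_trans hcc hey)
    rwa [abs_of_nonneg dist_nonneg, abs_of_nonneg hε.le] at this
  -- main argument
  intro z₁ hz₁ z₂ hz₂ w hw
  have hlog : (0:ℝ) ≤ Real.log (1 + Real.sqrt 2) :=
    Real.log_nonneg (by nlinarith [Real.sqrt_nonneg 2])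
  suffices hmem : w ∈ margulisTube ε g m by
    rw [Metric.infDist_zero_of_mem hmem]; exact hlog
  simp only [margulisTube, Set.mem_iUnion, Set.mem_setOf_eq, Finset.mem_Icc,
    exists_prop] at hz₁ hz₂ ⊢
  obtain ⟨i, hi, hdi⟩ := hz₁
  obtain ⟨j, hj, hdj⟩ := hz₂
  rcases (dist_nonneg : (0:ℝ) ≤ dist z₁ z₂).eq_or_lt with h0 | hd
  · -- degenerate case : w = z₁
    have h1 : dist z₁ w = 0 :=
      le_antisymm (by linarith [dist_nonneg (x := z₁) (y := w), dist_nonneg (x := w) (y := z₂)])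
        dist_nonneg
    have hwz : z₁ = w := dist_eq_zero.mp h1
    exact ⟨i, hi, by rw [← hwz]; exact hdi⟩
  · have hmb := mu_between hγ z₁ w z₂ hw hd
    rcases max_cases (mu γ z₁) (mu γ z₂) with ⟨hmax, _⟩ | ⟨hmax, _⟩
    · rw [hmax] at hmb
      exact ⟨i, hi, hcrit i w z₁ hmb hdi⟩
    · rw [hmax] at hmb
      exact ⟨j, hj, hcrit j w z₂ hmb hdj⟩
end
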